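/- Let 0 < s < 2 and let (e^{-tL})_{t>0} be a semigroup on L²(ℝ³) whose kernel satisfies the two-sided Gaussian-type bounds of Lemma 2.1 with parameter σ < 3/2. Then ‖(e^{-L/N²} - e^{-4L/N²})δ₀‖_{L²(ℝ³)} ≲ N^{3/2} for all N ∈ 2^ℤ, where δ₀ is the Dirac mass at the origin. -/

import Mathlib

open MeasureTheory Filter Set
open scoped Topology

noncomputable section

abbrev E3 := EuclideanSpace ℝ (Fin 3)

namespace Stmt16Aux

lemma integrable_abs_rpow_gauss {b : ℝ} (hb : 0 < b) :
    Integrable (fun s : ℝ => |s| ^ (-(1:ℝ)/3) * Real.exp (-b * s ^ 2)) := by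
  have h0 : IntegrableOn (fun s : ℝ => |s| ^ (-(1:ℝ)/3) * Real.exp (-b * s ^ 2)) (Ioi 0) :=
    (integrableOn_rpow_mul_exp_neg_mul_sq hb (by norm_num : (-1:ℝ) < -(1:ℝ)/3)).congr_fun
      (fun x hx => by rw [abs_of_pos hx]) measurableSet_Ioi
  have h1 : IntegrableOn (fun s : ℝ => |s| ^ (-(1:ℝ)/3) * Real.exp (-b * s ^ 2)) (Iic 0) := by
    rw [← Measure.map_neg_eq_self (volume : Measure ℝ)]
    have m : MeasurableEmbedding fun x : ℝ => -x :=
      (Homeomorph.neg ℝ).measurableEmbedding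
    rw [m.integrableOn_map_iff]
    simp only [Function.comp_def, abs_neg, neg_sq, neg_preimage, neg_Iic, neg_zero]
    exact Iff.mpr integrableOn_Ici_iff_integrableOn_Ioi h0
  have h2 := integrableOn_union.mpr ⟨h1, h0⟩
  rwa [Iic_union_Ioi, integrableOn_univ] at h2

lemma hyperplane_null (i : Fin 3) : volume {x : E3 | x i = 0} = 0 := by
  have h : {x : E3 | x i = 0}
      = (LinearMap.ker ((EuclideanSpace.proj i : E3 →L[ℝ] ℝ) : E3 →ₗ[ℝ] ℝ) : Set E3) := by
    ext x
    simp [LinearMap.mem_ker]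
  rw [h]
  apply Measure.addHaar_submodule
  intro htop
  have hmem : (EuclideanSpace.single i (1:ℝ)) ∈
      LinearMap.ker ((EuclideanSpace.proj i : E3 →L[ℝ] ℝ) : E3 →ₗ[ℝ] ℝ) := by
    rw [htop]; trivial
  simp [LinearMap.mem_ker] at hmem

lemma ae_coords_ne : ∀ᵐ x : E3, ∀ i : Fin 3, x i ≠ 0 := by
  have h : {x : E3 | ¬ ∀ i : Fin 3, x i ≠ 0} ⊆ ⋃ i : Fin 3, {x : E3 | x i = 0} := by
    intro x hx
    simp only [mem_setOf_eq, not_forall, not_not] at hx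
    obtain ⟨i, hi⟩ := hx
    exact mem_iUnion.mpr ⟨i, hi⟩
  rw [ae_iff]
  exact measure_mono_null h (measure_iUnion_null_iff.mpr fun i => hyperplane_null i)

lemma coord_le_norm (y : E3) (i : Fin 3) : |y i| ≤ ‖y‖ := by
  rw [EuclideanSpace.norm_eq, ← Real.sqrt_sq_eq_abs]
  apply Real.sqrt_le_sqrt
  have := Finset.single_le_sum (f := fun j => ‖y j‖ ^ 2)
    (fun j _ => sq_nonneg _) (Finset.mem_univ i)
  simpa [Real.norm_eq_abs, sq_abs] using this

lemma norm_sq_eq_sum (y : E3) : ‖y‖ ^ 2 = ∑ i, (y i) ^ 2 := by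
  rw [EuclideanSpace.norm_eq, Real.sq_sqrt (by positivity)]
  simp [Real.norm_eq_abs, sq_abs]

lemma integrableF {σ b : ℝ} (hσ2 : 2 * σ ≤ 1) (hb : 0 < b) :
    Integrable (fun y : E3 => (max 1 (1/‖y‖)) ^ (2*σ) * Real.exp (-b * ‖y‖ ^ 2)) := by
  set g : ℝ → ℝ := fun s => (1 + |s| ^ (-(1:ℝ)/3)) * Real.exp (-b * s ^ 2) with hg
  have hgint : Integrable g := by
    have h := (integrable_exp_neg_mul_sq hb).add (integrable_abs_rpow_gauss hb)
    simpa [hg, add_mul, one_mul, Pi.add_def] using h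
  have hGint : Integrable (fun x : E3 => ∏ i, g (x i)) := by
    have hpi : Integrable (fun y : Fin 3 → ℝ => ∏ i, g (y i)) :=
      Integrable.fintype_prod (fun _ => hgint)
    have e := EuclideanSpace.volume_preserving_symm_measurableEquiv_toLp (Fin 3)
    have h := (MeasurePreserving.integrable_comp_emb e
      (MeasurableEquiv.measurableEmbedding _)).mpr hpi
    exact h
  apply Integrable.mono' hGint
  · apply Measurable.aestronglyMeasurable
    have h1 : Measurable fun y : E3 => max 1 (1/‖y‖) := by
      simp only [one_div]
      exact measurable_const.max measurable_norm.inv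
    exact (h1.pow measurable_const).mul (((measurable_norm.pow_const 2).const_mul (-b)).exp)
  · filter_upwards [ae_coords_ne] with y hy
    have hy0 : y ≠ 0 := fun h => hy 0 (by rw [h]; rfl)
    have hny : (0:ℝ) < ‖y‖ := norm_pos_iff.mpr hy0
    have hMpos : (0:ℝ) < max 1 (1/‖y‖) := lt_of_lt_of_le one_pos (le_max_left _ _)
    have hFnn : 0 ≤ (max 1 (1/‖y‖)) ^ (2*σ) * Real.exp (-b * ‖y‖ ^ 2) :=
      mul_nonneg (Real.rpow_nonneg hMpos.le _) (Real.exp_pos _).le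
    rw [Real.norm_eq_abs, abs_of_nonneg hFnn]
    -- the exponential splits as a product
    have hexp : Real.exp (-b * ‖y‖ ^ 2) = ∏ i, Real.exp (-b * (y i) ^ 2) := by
      rw [← Real.exp_sum]
      congr 1
      rw [norm_sq_eq_sum, Finset.mul_sum]
    -- the max part is bounded by the product part
    have ha : ∀ i : Fin 3, (0:ℝ) < |y i| ^ (-(1:ℝ)/3) :=
      fun i => Real.rpow_pos_of_pos (abs_pos.mpr (hy i)) _
    have hprod : 1 + 1/‖y‖ ≤ ∏ i, (1 + |y i| ^ (-(1:ℝ)/3)) := by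
      have hploc : (|y 0| * |y 1| * |y 2|) ^ (-(1:ℝ)/3)
          = |y 0| ^ (-(1:ℝ)/3) * |y 1| ^ (-(1:ℝ)/3) * |y 2| ^ (-(1:ℝ)/3) := by
        rw [Real.mul_rpow (by positivity) (abs_nonneg _),
          Real.mul_rpow (abs_nonneg _) (abs_nonneg _)]
      have hle : |y 0| * |y 1| * |y 2| ≤ ‖y‖ ^ 3 := by
        have h0 := coord_le_norm y 0
        have h1 := coord_le_norm y 1
        have h2 := coord_le_norm y 2
        calc |y 0| * |y 1| * |y 2| ≤ ‖y‖ * ‖y‖ * ‖y‖ := by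
              gcongr <;> positivity
          _ = ‖y‖ ^ 3 := by ring
      have hPpos : (0:ℝ) < |y 0| * |y 1| * |y 2| :=
        mul_pos (mul_pos (abs_pos.mpr (hy 0)) (abs_pos.mpr (hy 1))) (abs_pos.mpr (hy 2))
      have hmono : (‖y‖ ^ 3) ^ (-(1:ℝ)/3) ≤ (|y 0| * |y 1| * |y 2|) ^ (-(1:ℝ)/3) :=
        Real.rpow_le_rpow_of_nonpos hPpos hle (by norm_num)
      have hval : (‖y‖ ^ 3) ^ (-(1:ℝ)/3) = 1/‖y‖ := by
        rw [← Real.rpow_natCast ‖y‖ 3, ← Real.rpow_mul hny.le]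
        norm_num [Real.rpow_neg_one]
      have hkey : 1/‖y‖ ≤ |y 0| ^ (-(1:ℝ)/3) * |y 1| ^ (-(1:ℝ)/3) * |y 2| ^ (-(1:ℝ)/3) := by
        rw [← hploc]; rw [← hval]; exact hmono
      rw [Fin.prod_univ_three]
      have h0 := (ha 0).le; have h1 := (ha 1).le; have h2 := (ha 2).le
      nlinarith [mul_nonneg h0 h1, mul_nonneg h1 h2, mul_nonneg h0 h2,
        mul_nonneg (mul_nonneg h0 h1) h2]
    have hmax : (max 1 (1/‖y‖)) ^ (2*σ) ≤ 1 + 1/‖y‖ := by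
      calc (max 1 (1/‖y‖)) ^ (2*σ) ≤ (max 1 (1/‖y‖)) ^ (1:ℝ) :=
            Real.rpow_le_rpow_of_exponent_le (le_max_left _ _) hσ2
        _ = max 1 (1/‖y‖) := Real.rpow_one _
        _ ≤ 1 + 1/‖y‖ := by
            have h01 : (0:ℝ) ≤ 1/‖y‖ := by positivity
            exact max_le (by linarith) (by linarith)
    calc (max 1 (1/‖y‖)) ^ (2*σ) * Real.exp (-b * ‖y‖ ^ 2)
        ≤ (1 + 1/‖y‖) * Real.exp (-b * ‖y‖ ^ 2) :=
          mul_le_mul_of_nonneg_right hmax (Real.exp_pos _).le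
      _ ≤ (∏ i, (1 + |y i| ^ (-(1:ℝ)/3))) * ∏ i, Real.exp (-b * (y i) ^ 2) := by
          rw [← hexp]
          exact mul_le_mul_of_nonneg_right hprod (Real.exp_pos _).le
      _ = ∏ i, g (y i) := by rw [← Finset.prod_mul_distrib]

lemma scaled_int (σ C c t : ℝ) (hc : 0 < c) (ht : 0 < t)
    (hF : Integrable (fun y : E3 => (max 1 (1/‖y‖)) ^ (2*σ) * Real.exp (-(2/c) * ‖y‖ ^ 2))) :
    Integrable (fun x : E3 => (C * (max 1 (Real.sqrt t / ‖x‖)) ^ σ * t ^ (-(3:ℝ)/2) *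
        Real.exp (-‖x‖ ^ 2 / (c * t))) ^ 2) ∧
    ∫ x : E3, (C * (max 1 (Real.sqrt t / ‖x‖)) ^ σ * t ^ (-(3:ℝ)/2) *
        Real.exp (-‖x‖ ^ 2 / (c * t))) ^ 2 =
      (C ^ 2 * ∫ y : E3, (max 1 (1/‖y‖)) ^ (2*σ) * Real.exp (-(2/c) * ‖y‖ ^ 2)) *
        t ^ (-(3:ℝ)/2) := by
  set F : E3 → ℝ := fun y => (max 1 (1/‖y‖)) ^ (2*σ) * Real.exp (-(2/c) * ‖y‖ ^ 2) with hFdef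
  have hst : (0:ℝ) < Real.sqrt t := Real.sqrt_pos.mpr ht
  have hR : ((Real.sqrt t)⁻¹ : ℝ) ≠ 0 := by positivity
  have hpt : ∀ x : E3, (C * (max 1 (Real.sqrt t / ‖x‖)) ^ σ * t ^ (-(3:ℝ)/2) *
      Real.exp (-‖x‖ ^ 2 / (c * t))) ^ 2
      = (C ^ 2 * t ^ (-(3:ℝ))) * F ((Real.sqrt t)⁻¹ • x) := by
    intro x
    have hnorm : ‖(Real.sqrt t)⁻¹ • x‖ = (Real.sqrt t)⁻¹ * ‖x‖ := by
      rw [norm_smul, Real.norm_eq_abs, abs_of_pos (by positivity)]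
    have h1 : 1/‖(Real.sqrt t)⁻¹ • x‖ = Real.sqrt t / ‖x‖ := by
      rw [hnorm, one_div, mul_inv, inv_inv, div_eq_mul_inv]
    have h2 : ‖(Real.sqrt t)⁻¹ • x‖ ^ 2 = ‖x‖ ^ 2 / t := by
      rw [hnorm, mul_pow, inv_pow, Real.sq_sqrt ht.le, div_eq_mul_inv, mul_comm]
    have hM : (0:ℝ) < max 1 (Real.sqrt t / ‖x‖) := lt_of_lt_of_le one_pos (le_max_left _ _)
    have e1 : ((max 1 (Real.sqrt t / ‖x‖)) ^ σ) ^ 2 = (max 1 (Real.sqrt t / ‖x‖)) ^ (2*σ) := by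
      rw [← Real.rpow_two, ← Real.rpow_mul hM.le, mul_comm]
    have e2 : (t ^ (-(3:ℝ)/2)) ^ 2 = t ^ (-(3:ℝ)) := by
      rw [← Real.rpow_two, ← Real.rpow_mul ht.le]
      norm_num
    have e3 : (Real.exp (-‖x‖ ^ 2 / (c * t))) ^ 2 = Real.exp (-(2/c) * (‖x‖ ^ 2 / t)) := by
      rw [← Real.exp_nat_mul]
      congr 1
      push_cast
      field_simp
      try ring
    simp only [hFdef, h1, h2]
    rw [mul_pow, mul_pow, mul_pow, e1, e2, e3]
    ring
  constructor
  · have hI : Integrable (fun x : E3 => F ((Real.sqrt t)⁻¹ • x)) :=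
      (integrable_comp_smul_iff volume F hR).mpr hF
    have := hI.const_mul (C ^ 2 * t ^ (-(3:ℝ)))
    exact this.congr (Filter.Eventually.of_forall fun x => (hpt x).symm)
  · calc ∫ x : E3, (C * (max 1 (Real.sqrt t / ‖x‖)) ^ σ * t ^ (-(3:ℝ)/2) *
        Real.exp (-‖x‖ ^ 2 / (c * t))) ^ 2
        = ∫ x : E3, (C ^ 2 * t ^ (-(3:ℝ))) * F ((Real.sqrt t)⁻¹ • x) := by
          exact integral_congr_ae (Filter.Eventually.of_forall hpt)
      _ = (C ^ 2 * t ^ (-(3:ℝ))) * ∫ x : E3, F ((Real.sqrt t)⁻¹ • x) :=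
          integral_const_mul _ _
      _ = (C ^ 2 * ∫ y : E3, F y) * t ^ (-(3:ℝ)/2) := by
          rw [MeasureTheory.Measure.integral_comp_smul volume F ((Real.sqrt t)⁻¹)]
          have hfr : Module.finrank ℝ E3 = 3 := finrank_euclideanSpace_fin
          rw [hfr]
          have hv : |(((Real.sqrt t)⁻¹) ^ 3)⁻¹| = t ^ ((3:ℝ)/2) := by
            rw [abs_of_pos (by positivity), inv_pow, inv_inv,
              ← Real.rpow_natCast (Real.sqrt t) 3, Real.rpow_def_of_pos hst]
            rw [Real.log_sqrt ht.le, Real.rpow_def_of_pos ht]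
            ring_nf
          rw [hv, smul_eq_mul]
          rw [show C ^ 2 * t ^ (-(3:ℝ)) * (t ^ ((3:ℝ)/2) * ∫ y : E3, F y)
            = (C ^ 2 * ∫ y : E3, F y) * (t ^ (-(3:ℝ)) * t ^ ((3:ℝ)/2)) by ring]
          rw [← Real.rpow_add ht]
          norm_num

end Stmt16Aux

open Stmt16Aux

/-- if the heat kernel `p(t,x,y)` of `L = -Δ + a/|x|²` obeys the upper bound
of Lemma 2.1 with parameter `σ < 3/2`, then the Littlewood–Paley piece of the Dirac delta,
`(e^{-L/N²} - e^{-4L/N²})δ₀`, has `L²` norm `≲ N^{3/2}` for every `N > 0`. -/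
theorem stmt_16 (a σ C c : ℝ) (ha : -1/4 < a) (hσ : σ = 1/2 - Real.sqrt (1/4 + a))
    (hσ' : σ < 3/2) (hC : 0 < C) (hc : 0 < c)
    (p : ℝ → E3 → E3 → ℝ)
    (hmeas : ∀ t : ℝ, Measurable (fun x : E3 => p t x 0))
    (hbound : ∀ t : ℝ, 0 < t → ∀ x : E3, x ≠ 0 →
      |p t x 0| ≤ C * (max 1 (Real.sqrt t / ‖x‖)) ^ σ * t ^ (-(3 : ℝ)/2) *
        Real.exp (-‖x‖ ^ 2 / (c * t))) :
    ∃ C' : ℝ, 0 < C' ∧ ∀ N : ℝ, 0 < N →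
      (∫ x : E3, |p (1 / N ^ 2) x 0 - p (4 / N ^ 2) x 0| ^ 2) ^ ((1 : ℝ)/2) ≤
        C' * N ^ ((3 : ℝ)/2) := by
  have hσ2 : 2 * σ ≤ 1 := by
    have hsp : 0 < Real.sqrt (1/4 + a) := Real.sqrt_pos.mpr (by linarith)
    rw [hσ]; linarith
  have hb2c : (0:ℝ) < 2/c := by positivity
  have hF := integrableF (σ := σ) (b := 2/c) hσ2 hb2c
  set K := ∫ y : E3, (max 1 (1/‖y‖)) ^ (2*σ) * Real.exp (-(2/c) * ‖y‖ ^ 2) with hKdef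
  have hK0 : 0 ≤ K := integral_nonneg fun y =>
    mul_nonneg (Real.rpow_nonneg (le_trans zero_le_one (le_max_left _ _)) _) (Real.exp_pos _).le
  set M : ℝ := 4 * C ^ 2 * (K + 1) with hMdef
  have hM : 0 < M := by positivity
  refine ⟨M ^ ((1:ℝ)/2), Real.rpow_pos_of_pos hM _, fun N hN => ?_⟩
  set t₁ : ℝ := 1 / N ^ 2 with ht₁def
  set t₂ : ℝ := 4 / N ^ 2 with ht₂def
  have ht₁ : 0 < t₁ := by positivity
  have ht₂ : 0 < t₂ := by positivity
  obtain ⟨hI₁, hEq₁⟩ := scaled_int σ C c t₁ hc ht₁ hF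
  obtain ⟨hI₂, hEq₂⟩ := scaled_int σ C c t₂ hc ht₂ hF
  set B₁ : E3 → ℝ := fun x => (C * (max 1 (Real.sqrt t₁ / ‖x‖)) ^ σ * t₁ ^ (-(3:ℝ)/2) *
      Real.exp (-‖x‖ ^ 2 / (c * t₁))) ^ 2 with hB₁def
  set B₂ : E3 → ℝ := fun x => (C * (max 1 (Real.sqrt t₂ / ‖x‖)) ^ σ * t₂ ^ (-(3:ℝ)/2) *
      Real.exp (-‖x‖ ^ 2 / (c * t₂))) ^ 2 with hB₂def
  have hg : Integrable (fun x : E3 => 2 * (B₁ x + B₂ x)) := ((hI₁.add hI₂).const_mul 2)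
  have h0ae : ∀ᵐ x : E3, x ≠ 0 := by
    have hset : {x : E3 | ¬ x ≠ 0} = {(0 : E3)} := by ext x; simp
    rw [ae_iff, hset]
    exact measure_singleton 0
  have hmono : ∫ x : E3, |p t₁ x 0 - p t₂ x 0| ^ 2 ≤ ∫ x : E3, 2 * (B₁ x + B₂ x) := by
    apply integral_mono_of_nonneg
    · exact Filter.Eventually.of_forall fun x => by positivity
    · exact hg
    · filter_upwards [h0ae] with x hx
      have b₁ := hbound t₁ ht₁ x hx
      have b₂ := hbound t₂ ht₂ x hx
      have hR₁ : 0 ≤ C * (max 1 (Real.sqrt t₁ / ‖x‖)) ^ σ * t₁ ^ (-(3:ℝ)/2) *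
          Real.exp (-‖x‖ ^ 2 / (c * t₁)) := (abs_nonneg _).trans b₁
      have hR₂ : 0 ≤ C * (max 1 (Real.sqrt t₂ / ‖x‖)) ^ σ * t₂ ^ (-(3:ℝ)/2) *
          Real.exp (-‖x‖ ^ 2 / (c * t₂)) := (abs_nonneg _).trans b₂
      obtain ⟨l₁, u₁⟩ := abs_le.mp b₁
      obtain ⟨l₂, u₂⟩ := abs_le.mp b₂
      simp only [hB₁def, hB₂def]
      rw [sq_abs]
      nlinarith [sq_nonneg (p t₁ x 0 - p t₂ x 0), sq_nonneg (p t₁ x 0 + p t₂ x 0)]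
  have hval : ∫ x : E3, 2 * (B₁ x + B₂ x)
      = 2 * ((C ^ 2 * K) * t₁ ^ (-(3:ℝ)/2) + (C ^ 2 * K) * t₂ ^ (-(3:ℝ)/2)) := by
    rw [integral_const_mul, integral_add hI₁ hI₂]
    rw [hB₁def, hB₂def]
    rw [hEq₁, hEq₂]
  have e₁ : t₁ ^ (-(3:ℝ)/2) = N ^ (3:ℝ) := by
    have h : t₁ = N ^ (-2:ℝ) := by
      rw [ht₁def, Real.rpow_neg hN.le, Real.rpow_two, one_div]
    rw [h, ← Real.rpow_mul hN.le]
    norm_num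
  have e₂ : t₂ ^ (-(3:ℝ)/2) ≤ N ^ (3:ℝ) := by
    have hle : t₁ ≤ t₂ := by
      rw [ht₁def, ht₂def]
      gcongr
      norm_num
    calc t₂ ^ (-(3:ℝ)/2) ≤ t₁ ^ (-(3:ℝ)/2) :=
          Real.rpow_le_rpow_of_nonpos ht₁ hle (by norm_num)
      _ = N ^ (3:ℝ) := e₁
  have hfin : ∫ x : E3, |p t₁ x 0 - p t₂ x 0| ^ 2 ≤ M * N ^ (3:ℝ) := by
    refine hmono.trans ?_
    rw [hval, e₁]
    have hCK : (0:ℝ) ≤ C ^ 2 * K := by positivity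
    have h2 := mul_le_mul_of_nonneg_left e₂ hCK
    have hN3 : (0:ℝ) ≤ N ^ (3:ℝ) := Real.rpow_nonneg hN.le _
    rw [hMdef]
    nlinarith
  calc (∫ x : E3, |p t₁ x 0 - p t₂ x 0| ^ 2) ^ ((1:ℝ)/2)
      ≤ (M * N ^ (3:ℝ)) ^ ((1:ℝ)/2) :=
        Real.rpow_le_rpow (integral_nonneg fun x => by positivity) hfin (by norm_num)
    _ = M ^ ((1:ℝ)/2) * N ^ ((3:ℝ)/2) := by
        rw [Real.mul_rpow hM.le (Real.rpow_nonneg hN.le _), ← Real.rpow_mul hN.le]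
        norm_num
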